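/- Let (A_v)_{v ∈ V} be a finite family of arcs on the circle ℝ/ℤ and let G be its circular-arc intersection graph. If G is triangle-free (contains no three pairwise adjacent vertices), then G contains at most one cycle; precisely, any two closed walks in G that are cycles have the same edge set. -/

import Mathlib

/-- The intersection graph of a family of sets `A : V → Set X`: distinct indices
`u, v` are adjacent iff `A u ∩ A v ≠ ∅`. -/
def intersectionGraph {V X : Type*} (A : V → Set X) : SimpleGraph V where
  Adj u v := u ≠ v ∧ (A u ∩ A v).Nonempty
  symm := by
    refine ⟨?_⟩
    rintro u v ⟨hne, x, hx1, hx2⟩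
    exact ⟨hne.symm, x, hx2, hx1⟩
  loopless := by
    refine ⟨?_⟩
    rintro u ⟨hne, -⟩
    exact hne rfl

/-- The arc on the circle `ℝ/ℤ` obtained by projecting the closed real interval `[a, b]`. -/
def arc (a b : ℝ) : Set (AddCircle (1 : ℝ)) :=
  (fun x : ℝ => (x : AddCircle (1 : ℝ))) '' Set.Icc a b

open Set SimpleGraph

namespace CircArc

lemma coe_add_int (x : ℝ) (n : ℤ) : ((x + n : ℝ) : AddCircle (1:ℝ)) = (x : AddCircle (1:ℝ)) := by
  have h : ((n : ℝ) : AddCircle (1:ℝ)) = 0 := by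
    rw [AddCircle.coe_eq_zero_iff]; exact ⟨n, by simp⟩
  rw [AddCircle.coe_add, h, add_zero]

lemma arc_shift (a b : ℝ) (n : ℤ) : arc (a + n) (b + n) = arc a b := by
  ext p
  constructor
  · rintro ⟨t, ht, rfl⟩
    refine ⟨t - n, ⟨by linarith [ht.1], by linarith [ht.2]⟩, ?_⟩
    show ((t - (n:ℝ) : ℝ) : AddCircle (1:ℝ)) = ((t : ℝ) : AddCircle (1:ℝ))
    rw [← coe_add_int (t - n) n]; norm_num
  · rintro ⟨t, ht, rfl⟩
    exact ⟨t + n, ⟨by linarith [ht.1], by linarith [ht.2]⟩, coe_add_int t n⟩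

lemma mem_arc_of_one_le {a b : ℝ} (h : 1 ≤ b - a) (p : AddCircle (1:ℝ)) : p ∈ arc a b := by
  obtain ⟨c, rfl⟩ := QuotientAddGroup.mk_surjective p
  refine ⟨c - ⌊c - a⌋, ⟨?_, ?_⟩, ?_⟩
  · have := Int.fract_nonneg (c - a)
    rw [Int.fract] at this; linarith
  · have := Int.fract_lt_one (c - a)
    rw [Int.fract] at this; linarith
  · show ((c - (⌊c - a⌋:ℝ) : ℝ) : AddCircle (1:ℝ)) = ((c : ℝ) : AddCircle (1:ℝ))
    rw [show c - (⌊c - a⌋ : ℝ) = c + ((-⌊c - a⌋ : ℤ) : ℝ) by push_cast; ring]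
    exact coe_add_int c (-⌊c - a⌋)

lemma arc_closed (a b : ℝ) : IsClosed (arc a b) :=
  (isCompact_Icc.image (AddCircle.continuous_mk' 1)).isClosed

lemma arc_preconnected (a b : ℝ) : IsPreconnected (arc a b) :=
  isPreconnected_Icc.image _ (AddCircle.continuous_mk' 1).continuousOn

lemma coe_inj_Ioo {c s t : ℝ} (hs : s ∈ Ioo c (c + 1)) (ht : t ∈ Ioo c (c + 1))
    (h : (s : AddCircle (1:ℝ)) = (t : AddCircle (1:ℝ))) : s = t := by
  haveI : Fact ((0:ℝ) < 1) := ⟨one_pos⟩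
  exact (AddCircle.coe_eq_coe_iff_of_mem_Ico (Ioo_subset_Ico_self hs)
    (Ioo_subset_Ico_self ht)).mp h



lemma getVert_one_ne_end {V : Type*} {G : SimpleGraph V} {x w : V} (p : G.Walk x w)
    (hp : p.IsPath) (hl : 2 ≤ p.length) : p.getVert 1 ≠ w := by
  cases p with
  | nil => simp at hl
  | @cons _ y _ h q =>
    rw [show (Walk.cons h q).getVert 1 = y from Walk.getVert_zero q]
    rintro rfl
    rw [Walk.cons_isPath_iff] at hp
    have : q = Walk.nil := (Walk.isPath_iff_eq_nil (p := q)).mp hp.1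
    subst this
    simp at hl

lemma exists_two_neighbors {V : Type*} [DecidableEq V] {G : SimpleGraph V} {u x : V}
    (W : G.Walk u u) (hW : W.IsCycle) (hx : x ∈ W.support) :
    ∃ y z, y ≠ z ∧ G.Adj x y ∧ G.Adj x z ∧ y ∈ W.support ∧ z ∈ W.support := by
  have hR : (W.rotate x hx).IsCycle := hW.rotate hx
  have hsupp : ∀ w, w ∈ (W.rotate x hx).support → w ∈ W.support := by
    intro w hw
    have hperm := Walk.support_rotate W x hx
    rcases List.mem_cons.mp ((W.rotate x hx).support_eq_cons ▸ hw) with rfl | hw'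
    · exact hx
    · exact List.mem_of_mem_tail (hperm.mem_iff.mp hw')
  set R := W.rotate x hx with hRdef
  have hnn : ¬ R.Nil := hR.not_nil
  obtain ⟨y₀, hadj, Q, hReq⟩ := Walk.not_nil_iff.mp hnn
  have hlen : 3 ≤ R.length := hR.three_le_length
  rw [hReq] at hR hlen
  rw [Walk.cons_isCycle_iff] at hR
  have hQlen : 2 ≤ Q.length := by simpa using Nat.le_of_succ_le_succ (by simpa using hlen)
  set z := Q.reverse.getVert 1 with hz
  have hQrnil : ¬ Q.reverse.Nil := by
    rw [Walk.not_nil_iff_lt_length, Walk.length_reverse]; omega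
  have hadj2 : G.Adj x z := Walk.adj_snd hQrnil
  have hzs : z ∈ Q.reverse.support := by
    rw [Walk.mem_support_iff_exists_getVert]
    exact ⟨1, rfl, by rw [Walk.length_reverse]; omega⟩
  have hyz : y₀ ≠ z := by
    intro hyzeq
    have := getVert_one_ne_end Q.reverse (hR.1.reverse) (by rw [Walk.length_reverse]; omega)
    exact this hyzeq.symm
  refine ⟨y₀, z, hyz, hadj, hadj2, ?_, ?_⟩
  · apply hsupp; rw [hReq]; simp
  · apply hsupp; rw [hReq]
    have : z ∈ Q.support := by rwa [Walk.support_reverse, List.mem_reverse] at hzs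
    simp [this]


lemma mem_support_tail_of_closed {V : Type*} {G : SimpleGraph V} {v y : V}
    {p : G.Walk v v} (hnn : ¬ p.Nil) (hy : y ∈ p.support) : y ∈ p.support.tail := by
  have h3 : 0 < p.length := Walk.not_nil_iff_lt_length.mp hnn
  rcases List.mem_cons.mp (p.support_eq_cons ▸ hy) with h | h
  · have hd : p.darts ≠ [] := by
      intro habs
      have := p.length_darts
      rw [habs] at this
      simp at this; omega
    have hv : v ∈ p.support.tail := by
      have h6 : (p.darts.getLast hd).snd ∈ p.darts.map (fun d => d.snd) :=
        List.mem_map_of_mem (List.getLast_mem hd)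
      rw [Walk.getLast_darts_eq_lastDart] at h6
      rw [← Walk.map_snd_darts]
      exact h6
    exact h ▸ hv
  · exact h

lemma mem_support_rotate_iff {V : Type*} [DecidableEq V] {G : SimpleGraph V} {u x y : V}
    {W : G.Walk u u} (hnn : ¬ W.Nil) (hx : x ∈ W.support) :
    y ∈ (W.rotate x hx).support ↔ y ∈ W.support := by
  have hperm := Walk.support_rotate W x hx
  have hnn' : ¬ (W.rotate x hx).Nil := by
    rw [Walk.not_nil_iff_lt_length] at hnn ⊢
    have h2 : (W.rotate x hx).support.tail.length = W.support.tail.length := hperm.perm.length_eq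
    have h4 := (W.rotate x hx).length_support
    have h5 := W.length_support
    simp only [List.length_tail, h4, h5] at h2
    omega
  constructor
  · intro h
    exact List.mem_of_mem_tail (hperm.perm.mem_iff.mp (mem_support_tail_of_closed hnn' h))
  · intro h
    exact List.mem_of_mem_tail (hperm.perm.mem_iff.mpr (mem_support_tail_of_closed hnn h))

section Main

variable {V : Type*} [Fintype V] [DecidableEq V] (a b : V → ℝ)

local notation "G" => intersectionGraph fun v => arc (a v) (b v)

lemma cycle_covers (hab : ∀ v, a v ≤ b v) (htf : (G).CliqueFree 3)
    {u : V} (W : (G).Walk u u) (hW : W.IsCycle) (p : AddCircle (1:ℝ)) :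
    ∃ v ∈ W.support, p ∈ arc (a v) (b v) := by
  by_contra hcon
  push_neg at hcon
  obtain ⟨c, rfl⟩ := QuotientAddGroup.mk_surjective p
  set n : V → ℤ := fun v => ⌈c - a v⌉ with hn
  set a' : V → ℝ := fun v => a v + n v with ha'
  set b' : V → ℝ := fun v => b v + n v with hb'
  have harc : ∀ v, arc (a' v) (b' v) = arc (a v) (b v) := fun v => arc_shift (a v) (b v) (n v)
  have hmem' : ∀ v, ∀ t ∈ Icc (a' v) (b' v), ((t:ℝ) : AddCircle (1:ℝ)) ∈ arc (a v) (b v) := by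
    intro v t ht
    rw [← harc v]; exact ⟨t, ht, rfl⟩
  have ha'lb : ∀ v ∈ W.support, c < a' v := by
    intro v hv
    have h1 : c ≤ a' v := by
      have := Int.le_ceil (c - a v)
      simp only [ha', hn]; push_cast; linarith
    rcases lt_or_eq_of_le h1 with h | h
    · exact h
    · exfalso
      apply hcon v hv
      rw [h]
      exact hmem' v (a' v) ⟨le_refl _, by simp only [ha', hb']; linarith [hab v]⟩
  have hb'ub : ∀ v ∈ W.support, b' v < c + 1 := by
    intro v hv
    by_contra h
    push_neg at h
    apply hcon v hv
    have ha'ub : a' v < c + 1 := by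
      have := Int.ceil_lt_add_one (c - a v)
      simp only [ha', hn]; push_cast; linarith
    have : ((c + 1 : ℝ) : AddCircle (1:ℝ)) ∈ arc (a v) (b v) :=
      hmem' v (c+1) ⟨le_of_lt ha'ub, h⟩
    rwa [AddCircle.coe_add_period] at this
  have hIoo : ∀ v ∈ W.support, Icc (a' v) (b' v) ⊆ Ioo c (c + 1) := by
    intro v hv t ht
    exact ⟨lt_of_lt_of_le (ha'lb v hv) ht.1, lt_of_le_of_lt ht.2 (hb'ub v hv)⟩
  have hint : ∀ v ∈ W.support, ∀ w ∈ W.support, (G).Adj v w →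
      ∃ s, s ∈ Icc (a' v) (b' v) ∧ s ∈ Icc (a' w) (b' w) := by
    rintro v hv w hw ⟨-, q, ⟨s₀, hs₀, hqs⟩, t₀, ht₀, hqt⟩
    have hs : s₀ + n v ∈ Icc (a' v) (b' v) := ⟨by simp only [ha']; linarith [hs₀.1],
      by simp only [hb']; linarith [hs₀.2]⟩
    have ht : t₀ + n w ∈ Icc (a' w) (b' w) := ⟨by simp only [ha']; linarith [ht₀.1],
      by simp only [hb']; linarith [ht₀.2]⟩
    have heq : ((s₀ + n v : ℝ) : AddCircle (1:ℝ)) = ((t₀ + n w : ℝ) : AddCircle (1:ℝ)) := by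
      rw [coe_add_int, coe_add_int]
      exact hqs.trans hqt.symm
    have := coe_inj_Ioo (hIoo v hv hs) (hIoo w hw ht) heq
    exact ⟨s₀ + n v, hs, this ▸ ht⟩
  -- choose minimizer of b'
  have hne : (W.support.toFinset : Finset V).Nonempty := ⟨u, by simp⟩
  obtain ⟨v, hvF, hmin⟩ := Finset.exists_min_image _ b' hne
  have hv : v ∈ W.support := List.mem_toFinset.mp hvF
  obtain ⟨y, z, hyz, hvy, hvz, hys, hzs⟩ := exists_two_neighbors W hW hv
  have hby : b' v ∈ Icc (a' y) (b' y) := by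
    obtain ⟨s, hsv, hsy⟩ := hint v hv y hys hvy
    exact ⟨le_trans hsy.1 hsv.2, hmin y (List.mem_toFinset.mpr hys)⟩
  have hbz : b' v ∈ Icc (a' z) (b' z) := by
    obtain ⟨s, hsv, hsz⟩ := hint v hv z hzs hvz
    exact ⟨le_trans hsz.1 hsv.2, hmin z (List.mem_toFinset.mpr hzs)⟩
  have hadjyz : (G).Adj y z :=
    ⟨hyz, ((b' v : ℝ) : AddCircle (1:ℝ)), hmem' y _ hby, hmem' z _ hbz⟩
  exact htf _ (is3Clique_triple_iff.mpr ⟨hvy, hvz, hadjyz⟩)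

lemma support_subset (hab : ∀ v, a v ≤ b v) (htf : (G).CliqueFree 3)
    {u₁ u₂ : V} (W₁ : (G).Walk u₁ u₁) (W₂ : (G).Walk u₂ u₂)
    (h₁ : W₁.IsCycle) (h₂ : W₂.IsCycle) : ∀ x ∈ W₂.support, x ∈ W₁.support := by
  intro x hx
  by_contra hxn
  obtain ⟨y, z, hyz, hxy, hxz, -, -⟩ := exists_two_neighbors W₂ h₂ hx
  have key : ∀ w, (G).Adj x w → w ∈ W₁.support := by
    intro w hw
    obtain ⟨p, hpx, hpw⟩ := hw.2
    obtain ⟨v, hv, hpv⟩ := cycle_covers a b hab htf W₁ h₁ p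
    have hvx : v ≠ x := fun h => hxn (h ▸ hv)
    rcases eq_or_ne v w with rfl | hvw
    · exact hv
    · exact absurd (is3Clique_triple_iff.mpr
        ⟨hw, ⟨hvx.symm, p, hpx, hpv⟩, ⟨hvw.symm, p, hpw, hpv⟩⟩) (htf {x, w, v})
  have hy1 : y ∈ W₁.support := key y hxy
  have hz1 : z ∈ W₁.support := key z hxz
  -- connectedness argument
  set S := arc (a x) (b x) with hS
  set C := arc (a y) (b y) with hC
  set T : Set V := {v | v ∈ W₁.support ∧ v ≠ y ∧ (S ∩ arc (a v) (b v)).Nonempty} with hT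
  set D := ⋃ v ∈ T, arc (a v) (b v) with hD
  have hDclosed : IsClosed D := (Set.Finite.isClosed_biUnion (Set.toFinite T)
    (fun v _ => arc_closed (a v) (b v)))
  have hdisj : ∀ p, p ∈ S → p ∈ C → p ∈ D → False := by
    intro p hpS hpC hpD
    obtain ⟨v, hvT, hpv⟩ := mem_iUnion₂.mp hpD
    have hvx : v ≠ x := fun h => hxn (h ▸ hvT.1)
    exact htf {x, y, v} (is3Clique_triple_iff.mpr
      ⟨hxy, ⟨hvx.symm, p, hpS, hpv⟩, ⟨(hvT.2.1).symm, p, hpC, hpv⟩⟩)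
  have hcover : S ⊆ C ∪ D := by
    intro q hq
    obtain ⟨v, hv, hqv⟩ := cycle_covers a b hab htf W₁ h₁ q
    rcases eq_or_ne v y with rfl | hvy
    · exact Or.inl hqv
    · exact Or.inr (mem_iUnion₂.mpr ⟨v, ⟨hv, hvy, ⟨q, hq, hqv⟩⟩, hqv⟩)
  have hpre : IsPreconnected S := arc_preconnected (a x) (b x)
  obtain ⟨p₀, hp₀S, hp₀C⟩ := hxy.2
  obtain ⟨q₀, hq₀S, hq₀z⟩ := hxz.2
  have hq₀D : q₀ ∈ D := mem_iUnion₂.mpr ⟨z, ⟨hz1, hyz.symm, ⟨q₀, hq₀S, hq₀z⟩⟩, hq₀z⟩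
  have hsub : S ⊆ Dᶜ ∪ Cᶜ := by
    intro q hq
    by_contra hcontra
    rw [mem_union] at hcontra
    push_neg at hcontra
    simp only [mem_compl_iff, not_not] at hcontra
    exact hdisj q hq hcontra.2 hcontra.1
  have h1 : (S ∩ Dᶜ).Nonempty := ⟨p₀, hp₀S, fun hD' => hdisj p₀ hp₀S hp₀C hD'⟩
  have h2 : (S ∩ Cᶜ).Nonempty := ⟨q₀, hq₀S, fun hC' => hdisj q₀ hq₀S hC' hq₀D⟩
  obtain ⟨r, hrS, hrD, hrC⟩ := hpre Dᶜ Cᶜ hDclosed.isOpen_compl (arc_closed (a y) (b y)).isOpen_compl hsub h1 h2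
  rcases hcover hrS with h | h
  · exact hrC h
  · exact hrD h

lemma edges_subset (hab : ∀ v, a v ≤ b v) (htf : (G).CliqueFree 3)
    {u₁ u₂ : V} (W₁ : (G).Walk u₁ u₁) (W₂ : (G).Walk u₂ u₂)
    (h₁ : W₁.IsCycle) (h₂ : W₂.IsCycle) : ∀ e ∈ W₂.edges, e ∈ W₁.edges := by
  intro e he
  revert he
  refine Sym2.ind ?_ e
  intro u w he
  have hadj : (G).Adj u w := W₂.adj_of_mem_edges he
  have hu1 : u ∈ W₁.support :=
    support_subset a b hab htf W₁ W₂ h₁ h₂ u (W₂.fst_mem_support_of_mem_edges he)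
  have hw1 : w ∈ W₁.support :=
    support_subset a b hab htf W₁ W₂ h₁ h₂ w (W₂.snd_mem_support_of_mem_edges he)
  by_contra hne
  have hRc : (W₁.rotate u hu1).IsCycle := h₁.rotate hu1
  have hRedges : ∀ e', e' ∈ (W₁.rotate u hu1).edges ↔ e' ∈ W₁.edges :=
    fun e' => (Walk.rotate_edges W₁ u hu1).mem_iff
  have hwR : w ∈ (W₁.rotate u hu1).support := (mem_support_rotate_iff h₁.not_nil hu1).mpr hw1
  obtain ⟨y₀, hady, Q, hReq⟩ := Walk.not_nil_iff.mp hRc.not_nil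
  have hRc2 : (Walk.cons hady Q).IsCycle := hReq ▸ hRc
  have hlen3 : 3 ≤ (Walk.cons hady Q).length := hRc2.three_le_length
  rw [Walk.cons_isCycle_iff] at hRc2
  have hwQ : w ∈ Q.support := by
    have h7 := hwR
    rw [hReq, Walk.support_cons] at h7
    rcases List.mem_cons.mp h7 with h | h
    · exact absurd h.symm hadj.ne
    · exact h
  have hy0w : y₀ ≠ w := by
    rintro rfl
    apply hne
    rw [← hRedges, hReq, Walk.edges_cons]
    exact List.mem_cons_self
  have hP₂path : (Q.dropUntil w hwQ).IsPath := hRc2.1.dropUntil hwQ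
  have hC₃ : (Walk.cons hadj (Q.dropUntil w hwQ)).IsCycle := by
    rw [Walk.cons_isCycle_iff]
    refine ⟨hP₂path, fun hmem => hne ?_⟩
    rw [← hRedges, hReq, Walk.edges_cons]
    exact List.mem_cons_of_mem _ (Walk.edges_dropUntil_subset Q hwQ hmem)
  have hy0u : y₀ ≠ u := by
    rintro rfl
    have := (Walk.isPath_iff_eq_nil (p := Q)).mp hRc2.1
    subst this
    simp at hlen3
  have hQsupp : Q.support = (Q.takeUntil w hwQ).support ++ (Q.dropUntil w hwQ).support.tail := by
    conv_lhs => rw [← Q.take_spec hwQ]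
    rw [Walk.support_append]
  have hnodup : Q.support.Nodup := hRc2.1.support_nodup
  have hy0P₂ : y₀ ∉ (Q.dropUntil w hwQ).support := by
    intro hmem
    rcases List.mem_cons.mp ((Q.dropUntil w hwQ).support_eq_cons ▸ hmem) with h | h
    · exact hy0w h
    · rw [hQsupp] at hnodup
      exact (List.disjoint_of_nodup_append hnodup)
        (Walk.start_mem_support (Q.takeUntil w hwQ)) h
  have hy0C₃ : y₀ ∉ (Walk.cons hadj (Q.dropUntil w hwQ)).support := by
    rw [Walk.support_cons]
    intro hmem
    rcases List.mem_cons.mp hmem with h | h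
    · exact hy0u h
    · exact hy0P₂ h
  have hy0W₁ : y₀ ∈ W₁.support := by
    refine (mem_support_rotate_iff h₁.not_nil hu1).mp ?_
    rw [hReq, Walk.support_cons]
    exact List.mem_cons_of_mem _ (Walk.start_mem_support Q)
  exact hy0C₃ (support_subset a b hab htf (Walk.cons hadj (Q.dropUntil w hwQ)) W₁ hC₃ h₁ y₀ hy0W₁)

end Main

end CircArc

theorem stmt4 {V : Type*} [Fintype V] (a b : V → ℝ) (hab : ∀ v, a v ≤ b v)
    (htf : (intersectionGraph fun v => arc (a v) (b v)).CliqueFree 3) :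
    ∀ (x y : V) (W₁ : (intersectionGraph fun v => arc (a v) (b v)).Walk x x)
      (W₂ : (intersectionGraph fun v => arc (a v) (b v)).Walk y y),
      W₁.IsCycle → W₂.IsCycle → {e | e ∈ W₁.edges} = {e | e ∈ W₂.edges} := by
  classical
  intro x y W₁ W₂ h₁ h₂
  ext e
  simp only [Set.mem_setOf_eq]
  exact ⟨fun h => CircArc.edges_subset a b hab htf W₂ W₁ h₂ h₁ e h,
    fun h => CircArc.edges_subset a b hab htf W₁ W₂ h₁ h₂ e h⟩
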